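/- Define L(n, k) by the recursion above. Then for fixed n, L(n, k) / k^{⌊n/2⌋} converges as k → ∞ to a_{⌊(n+1)/2⌋} / ⌊n/2⌋!, where a_i are the telephone numbers (a_0 = a_1 = 1, a_i = a_{i-1} + (i-1)a_{i-2}). -/

import Mathlib

/-- The telephone numbers: `a 0 = a 1 = 1`, `a (i+2) = a (i+1) + (i+1) * a i`. -/
def telephone : ℕ → ℕ
  | 0 => 1
  | 1 => 1
  | (i + 2) => telephone (i + 1) + (i + 1) * telephone i

open Filter Finset

section Analytic

lemma stmt10_base_pow (D : ℕ) :
    Tendsto (fun k : ℕ => (∑ m ∈ range k, (m:ℝ)^D) / (k:ℝ)^(D+1)) atTop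
      (nhds (1/(D+1))) := by
  set c : ℕ → ℝ := fun i => ((bernoulli i * ((D+1).choose i) : ℚ) : ℝ) with hc
  have key : ∀ k : ℕ, (∑ m ∈ range k, (m:ℝ)^D)
      = ∑ i ∈ range (D+1), c i * (k:ℝ)^(D+1-i) / (D+1) := by
    intro k
    have h := congrArg (fun q : ℚ => (q : ℝ)) (sum_range_pow k D)
    push_cast at h
    convert h using 2 <;> simp [c]
  have hg : Continuous (fun x : ℝ => ∑ i ∈ range (D+1), c i * x^i / (D+1)) := by
    continuity
  have h0 : (∑ i ∈ range (D+1), c i * (0:ℝ)^i / (D+1)) = 1/(D+1) := by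
    rw [Finset.sum_eq_single 0]
    · simp [c]
    · intro i _ hi; simp [zero_pow hi]
    · simp
  have htend : Tendsto (fun k : ℕ => ∑ i ∈ range (D+1), c i * ((1:ℝ)/k)^i / (D+1)) atTop
      (nhds (1/(D+1))) := by
    rw [← h0]
    exact (hg.tendsto 0).comp tendsto_one_div_atTop_nhds_zero_nat
  apply htend.congr'
  filter_upwards [eventually_ge_atTop 1] with k hk
  rw [key, Finset.sum_div]
  apply Finset.sum_congr rfl
  intro i hi
  have hkpos : (0:ℝ) < (k:ℝ) := by exact_mod_cast hk
  have hsplit : (k:ℝ)^(D+1) = (k:ℝ)^(D+1-i) * (k:ℝ)^i := by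
    rw [← pow_add]; congr 1; have := Finset.mem_range.mp hi; omega
  rw [div_div, hsplit, one_div, inv_pow]
  field_simp

lemma stmt10_nat_pow_inv_tendsto (e : ℕ) (he : e ≠ 0) :
    Tendsto (fun k : ℕ => ((k:ℝ)^e)⁻¹) atTop (nhds 0) := by
  apply Tendsto.inv_tendsto_atTop
  exact (tendsto_pow_atTop he).comp tendsto_natCast_atTop_atTop

lemma stmt10_sum_zero_pow (g : ℕ → ℝ) (D : ℕ)
    (h : Tendsto (fun m : ℕ => g m / (m:ℝ)^D) atTop (nhds 0)) :
    Tendsto (fun k : ℕ => (∑ m ∈ range k, g m) / (k:ℝ)^(D+1)) atTop (nhds 0) := by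
  set r : ℕ → ℝ := fun m => |g m| / (m:ℝ)^D with hr
  have hrnn : ∀ m, 0 ≤ r m := fun m => by positivity
  have hrt : Tendsto r atTop (nhds 0) := by
    have := h.abs
    simp only [abs_div, abs_zero] at this
    refine this.congr (fun m => ?_)
    rw [abs_of_nonneg (by positivity : (0:ℝ) ≤ (m:ℝ)^D)]
  have hces : Tendsto (fun k : ℕ => (∑ m ∈ range k, r m) / k) atTop (nhds 0) := by
    exact hrt.cesaro.congr (fun n => by rw [inv_mul_eq_div])
  have hG : Tendsto (fun k : ℕ => |g 0| / (k:ℝ)^(D+1) + (∑ m ∈ range k, r m) / k) atTop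
      (nhds 0) := by
    have h1 : Tendsto (fun k : ℕ => |g 0| / (k:ℝ)^(D+1)) atTop (nhds 0) := by
      have h2 := (stmt10_nat_pow_inv_tendsto (D+1) (by omega)).const_mul |g 0|
      simp only [mul_zero] at h2
      exact h2.congr (fun k => by rw [div_eq_mul_inv])
    simpa using h1.add hces
  apply squeeze_zero_norm' _ hG
  filter_upwards [eventually_ge_atTop 1] with k hk
  have hkpos : (0:ℝ) < (k:ℝ) := by exact_mod_cast hk
  have hb1 : |∑ m ∈ range k, g m| ≤ |g 0| + (∑ m ∈ range k, r m) * (k:ℝ)^D := by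
    calc |∑ m ∈ range k, g m| ≤ ∑ m ∈ range k, |g m| := Finset.abs_sum_le_sum_abs _ _
    _ = |g 0| + ∑ m ∈ Ico 1 k, |g m| := by
        rw [range_eq_Ico, Finset.sum_eq_sum_Ico_succ_bot (by omega)]
    _ ≤ |g 0| + ∑ m ∈ Ico 1 k, r m * (k:ℝ)^D := by
        gcongr with m hm
        rw [mem_Ico] at hm
        have hmpos : (0:ℝ) < (m:ℝ)^D := by
          have : (0:ℝ) < (m:ℝ) := by exact_mod_cast hm.1
          positivity
        rw [hr]
        rw [div_mul_eq_mul_div, le_div_iff₀ hmpos]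
        have hmk : (m:ℝ)^D ≤ (k:ℝ)^D := by
          gcongr
          exact_mod_cast Nat.le_of_lt hm.2
        nlinarith [abs_nonneg (g m)]
    _ ≤ |g 0| + (∑ m ∈ range k, r m) * (k:ℝ)^D := by
        gcongr
        rw [← Finset.sum_mul]
        have hsub : ∑ m ∈ Ico 1 k, r m ≤ ∑ m ∈ range k, r m :=
          Finset.sum_le_sum_of_subset_of_nonneg
            (by rw [range_eq_Ico]; exact Finset.Ico_subset_Ico (by omega) le_rfl)
            (fun m _ _ => hrnn m)
        have : (0:ℝ) ≤ (k:ℝ)^D := by positivity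
        nlinarith
  calc ‖(∑ m ∈ range k, g m) / (k:ℝ)^(D+1)‖
      = |∑ m ∈ range k, g m| / (k:ℝ)^(D+1) := by
        rw [Real.norm_eq_abs, abs_div, abs_of_nonneg (by positivity : (0:ℝ) ≤ (k:ℝ)^(D+1))]
    _ ≤ (|g 0| + (∑ m ∈ range k, r m) * (k:ℝ)^D) / (k:ℝ)^(D+1) := by
        gcongr
    _ = |g 0| / (k:ℝ)^(D+1) + (∑ m ∈ range k, r m) / k := by
        rw [add_div]
        congr 1
        rw [pow_succ]
        field_simp

lemma stmt10_cesaro_pow (f : ℕ → ℝ) (D : ℕ) (c : ℝ)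
    (h : Tendsto (fun m : ℕ => f m / (m:ℝ)^D) atTop (nhds c)) :
    Tendsto (fun k : ℕ => (∑ m ∈ range k, f m) / (k:ℝ)^(D+1)) atTop (nhds (c/(D+1))) := by
  set g : ℕ → ℝ := fun m => f m - c * (m:ℝ)^D with hg
  have hgz : Tendsto (fun m : ℕ => g m / (m:ℝ)^D) atTop (nhds 0) := by
    have h2 : Tendsto (fun m : ℕ => f m / (m:ℝ)^D - c) atTop (nhds (c - c)) :=
      h.sub_const c
    rw [sub_self] at h2
    apply h2.congr'
    filter_upwards [eventually_ge_atTop 1] with m hm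
    have hmpos : ((m:ℝ)^D) ≠ 0 := by
      have : (0:ℝ) < (m:ℝ) := by exact_mod_cast hm
      positivity
    rw [hg]
    field_simp
  have hA := stmt10_sum_zero_pow g D hgz
  have hB := (stmt10_base_pow D).const_mul c
  have := hA.add hB
  rw [zero_add] at this
  have heq : c * (1/(D+1) : ℝ) = c / (D+1) := by ring
  rw [heq] at this
  apply this.congr (fun k => ?_)
  rw [mul_div_assoc', ← add_div]
  congr 1
  rw [Finset.mul_sum, ← Finset.sum_add_distrib]
  apply Finset.sum_congr rfl (fun m _ => by rw [hg]; ring)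

lemma stmt10_shift_pow (f : ℕ → ℝ) (e d : ℕ) (c : ℝ) (hed : e ≤ d)
    (h : Tendsto (fun k : ℕ => f k / (k:ℝ)^e) atTop (nhds c)) :
    Tendsto (fun k : ℕ => f k / (k:ℝ)^d) atTop (nhds (if e = d then c else 0)) := by
  rcases eq_or_lt_of_le hed with rfl | hlt
  · simpa using h
  · rw [if_neg (by omega)]
    have hz : Tendsto (fun k : ℕ => ((1:ℝ)/k)^(d-e)) atTop (nhds 0) := by
      have := (tendsto_one_div_atTop_nhds_zero_nat (𝕜 := ℝ)).pow (d-e)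
      rwa [zero_pow (by omega)] at this
    have := h.mul hz
    rw [mul_zero] at this
    apply this.congr'
    filter_upwards [eventually_ge_atTop 1] with k hk
    have hkpos : ((k:ℝ)) ≠ 0 := by positivity
    have hs : (k:ℝ)^d = (k:ℝ)^e * (k:ℝ)^(d-e) := by rw [← pow_add]; congr 1; omega
    rw [one_div, inv_pow, ← div_eq_mul_inv, hs, ← div_div]

end Analytic

section Combinatorial

/-- statistic `D`: sum of `count i / 2`. -/
def myD (s : Multiset ℕ) : ℕ := ∑ i ∈ Finset.Icc 1 s.sup, s.count i / 2
/-- statistic `E`: the defect `n - 2D`. -/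
def myE (s : Multiset ℕ) : ℕ :=
  ∑ i ∈ Finset.Icc 1 s.sup, ((i-1) * s.count i + s.count i % 2)

lemma stmt10_mem_Icc_of_mem {s : Multiset ℕ} (hpos : ∀ p ∈ s, 0 < p) {i : ℕ} (hi : i ∈ s) :
    i ∈ Finset.Icc 1 s.sup := Finset.mem_Icc.mpr ⟨hpos i hi, Multiset.le_sup hi⟩

lemma stmt10_sum_eq_count (s : Multiset ℕ) (hpos : ∀ p ∈ s, 0 < p) :
    s.sum = ∑ i ∈ Finset.Icc 1 s.sup, i * s.count i := by
  have h := (Finset.sum_multiset_map_count s id).symm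
  rw [Multiset.map_id] at h
  rw [← h]
  have h2 : ∑ m ∈ s.toFinset, Multiset.count m s • id m
      = ∑ m ∈ s.toFinset, m * Multiset.count m s :=
    Finset.sum_congr rfl (fun i _ => by rw [smul_eq_mul, id, mul_comm])
  rw [h2]
  apply Finset.sum_subset
  · intro i hi; exact stmt10_mem_Icc_of_mem hpos (Multiset.mem_toFinset.mp hi)
  · intro i _ hni
    rw [Multiset.count_eq_zero_of_notMem (fun h' => hni (Multiset.mem_toFinset.mpr h'))]
    simp

lemma stmt10_two_myD_add_myE (s : Multiset ℕ) (hpos : ∀ p ∈ s, 0 < p) :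
    2 * myD s + myE s = s.sum := by
  rw [stmt10_sum_eq_count s hpos, myD, myE, Finset.mul_sum, ← Finset.sum_add_distrib]
  apply Finset.sum_congr rfl
  intro i hi
  obtain ⟨j, rfl⟩ : ∃ j, i = j + 1 := ⟨i - 1, by
    have := (Finset.mem_Icc.mp hi).1; omega⟩
  set c := s.count (j+1)
  have h1 : (j + 1) * c = j * c + c := by ring
  simp only [Nat.add_sub_cancel]
  omega

lemma stmt10_exists_two_le {n : ℕ} {s : Multiset ℕ} (hpos : ∀ p ∈ s, 0 < p) (hsum : s.sum = n)
    (hrep : s ≠ Multiset.replicate n 1) : ∃ p ∈ s, 2 ≤ p := by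
  by_contra hc
  push_neg at hc
  apply hrep
  have h1 : ∀ p ∈ s, p = 1 := fun p hp => by have := hpos p hp; have := hc p hp; omega
  have h2 : s = Multiset.replicate (Multiset.card s) 1 :=
    (Multiset.eq_replicate_card).mpr h1
  have h3 : Multiset.card s = n := by
    rw [h2] at hsum; simpa using hsum
  rwa [h3] at h2

lemma stmt10_myE_ge_two {n : ℕ} {s : Multiset ℕ} (hpos : ∀ p ∈ s, 0 < p) (hsum : s.sum = n)
    (hrep : s ≠ Multiset.replicate n 1) : 2 ≤ myE s := by
  obtain ⟨p, hp, hp2⟩ := stmt10_exists_two_le hpos hsum hrep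
  have hc : 1 ≤ s.count p := Multiset.one_le_count_iff_mem.mpr hp
  have hterm : 2 ≤ (p-1) * s.count p + s.count p % 2 := by
    have h1 : 1 * s.count p ≤ (p-1) * s.count p :=
      Nat.mul_le_mul_right _ (by omega)
    omega
  calc 2 ≤ (p-1) * s.count p + s.count p % 2 := hterm
  _ ≤ myE s := Finset.single_le_sum (f := fun i => (i-1) * s.count i + s.count i % 2)
      (fun i _ => Nat.zero_le _) (stmt10_mem_Icc_of_mem hpos hp)

lemma stmt10_classify {n : ℕ} {s : Multiset ℕ} (hpos : ∀ p ∈ s, 0 < p) (hsum : s.sum = n)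
    (hrep : s ≠ Multiset.replicate n 1) (hE : myE s ≤ 3) :
    (∃ m, s = 2 ::ₘ Multiset.replicate m 1 ∧ n = 2 + m) ∨
    (∃ m, s = 2 ::ₘ 2 ::ₘ Multiset.replicate m 1 ∧ n = 4 + m) ∨
    (∃ m, s = 3 ::ₘ Multiset.replicate m 1 ∧ n = 3 + m) := by
  have key : ∀ i ∈ s, (i-1) * s.count i + s.count i % 2 ≤ 3 := by
    intro i hi
    exact le_trans (Finset.single_le_sum
      (f := fun i => (i-1) * s.count i + s.count i % 2)
      (fun j _ => Nat.zero_le _) (stmt10_mem_Icc_of_mem hpos hi)) hE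
  have h4 : ∀ i ∈ s, i ≤ 3 := by
    intro i hi
    by_contra hgt
    push_neg at hgt
    have hc : 1 ≤ s.count i := Multiset.one_le_count_iff_mem.mpr hi
    have h1 : 3 * s.count i ≤ (i-1) * s.count i := Nat.mul_le_mul_right _ (by omega)
    have := key i hi
    omega
  have h0mem : (0:ℕ) ∉ s := fun h => by have := hpos 0 h; omega
  by_cases h3 : 3 ∈ s
  · right; right
    have hsup3 : 3 ≤ s.sup := Multiset.le_sup h3
    have hsub : ({2, 3} : Finset ℕ) ⊆ Finset.Icc 1 s.sup := by
      intro x hx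
      simp only [Finset.mem_insert, Finset.mem_singleton] at hx
      rcases hx with rfl | rfl <;> (rw [Finset.mem_Icc]; omega)
    have hpair : (2-1) * s.count 2 + s.count 2 % 2 + ((3-1) * s.count 3 + s.count 3 % 2)
        ≤ 3 := by
      have := Finset.sum_le_sum_of_subset_of_nonneg hsub
        (f := fun i => (i-1) * s.count i + s.count i % 2) (fun _ _ _ => Nat.zero_le _)
      rw [Finset.sum_pair (by omega)] at this
      exact le_trans this hE
    have hc3 : 1 ≤ s.count 3 := Multiset.one_le_count_iff_mem.mpr h3
    have hc3' : s.count 3 = 1 := by omega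
    have hc2 : s.count 2 = 0 := by omega
    have hs3 : s = 3 ::ₘ Multiset.replicate (s.count 1) 1 := by
      ext a
      rcases a with _ | _ | _ | _ | a
      · simp [Multiset.count_cons, Multiset.count_replicate,
          Multiset.count_eq_zero_of_notMem h0mem]
      · simp [Multiset.count_cons, Multiset.count_replicate]
      · simp [Multiset.count_cons, Multiset.count_replicate, hc2]
      · simp [Multiset.count_cons, Multiset.count_replicate, hc3']
      · have : (a+4:ℕ) ∉ s := fun h => by have := h4 _ h; omega
        simp [Multiset.count_cons, Multiset.count_replicate,
          Multiset.count_eq_zero_of_notMem this]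
    refine ⟨s.count 1, hs3, ?_⟩
    rw [hs3] at hsum
    simp [Multiset.sum_cons, Multiset.sum_replicate] at hsum
    omega
  · have hc3 : s.count 3 = 0 := Multiset.count_eq_zero_of_notMem h3
    obtain ⟨p, hp, hp2⟩ := stmt10_exists_two_le hpos hsum hrep
    have hp3 : p ≤ 3 := h4 p hp
    have hpe : p = 2 := by
      rcases Nat.eq_or_lt_of_le hp3 with h | h
      · exact absurd (h ▸ hp) h3
      · omega
    have h2mem : (2:ℕ) ∈ s := hpe ▸ hp
    have hc2 : 1 ≤ s.count 2 := Multiset.one_le_count_iff_mem.mpr h2mem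
    have hkey2 := key 2 h2mem
    simp only [show (2:ℕ)-1 = 1 from rfl, one_mul] at hkey2
    have hc2' : s.count 2 = 1 ∨ s.count 2 = 2 := by omega
    have hother : ∀ a, (a+4:ℕ) ∉ s := fun a h => by have := h4 _ h; omega
    rcases hc2' with hc2' | hc2'
    · left
      have hs2 : s = 2 ::ₘ Multiset.replicate (s.count 1) 1 := by
        ext a
        rcases a with _ | _ | _ | _ | a
        · simp [Multiset.count_cons, Multiset.count_replicate,
            Multiset.count_eq_zero_of_notMem h0mem]
        · simp [Multiset.count_cons, Multiset.count_replicate]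
        · simp [Multiset.count_cons, Multiset.count_replicate, hc2']
        · simp [Multiset.count_cons, Multiset.count_replicate, hc3]
        · simp [Multiset.count_cons, Multiset.count_replicate,
            Multiset.count_eq_zero_of_notMem (hother a)]
      refine ⟨s.count 1, hs2, ?_⟩
      rw [hs2] at hsum
      simp [Multiset.sum_cons, Multiset.sum_replicate] at hsum
      omega
    · right; left
      have hs2 : s = 2 ::ₘ 2 ::ₘ Multiset.replicate (s.count 1) 1 := by
        ext a
        rcases a with _ | _ | _ | _ | a
        · simp [Multiset.count_cons, Multiset.count_replicate,
            Multiset.count_eq_zero_of_notMem h0mem]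
        · simp [Multiset.count_cons, Multiset.count_replicate]
        · simp [Multiset.count_cons, Multiset.count_replicate, hc2']
        · simp [Multiset.count_cons, Multiset.count_replicate, hc3]
        · simp [Multiset.count_cons, Multiset.count_replicate,
            Multiset.count_eq_zero_of_notMem (hother a)]
      refine ⟨s.count 1, hs2, ?_⟩
      rw [hs2] at hsum
      simp [Multiset.sum_cons, Multiset.sum_replicate] at hsum
      omega

lemma stmt10_count_lt {n : ℕ} (hn : 1 ≤ n) {s : Multiset ℕ} (hpos : ∀ p ∈ s, 0 < p)
    (hsum : s.sum = n) (hrep : s ≠ Multiset.replicate n 1) (i : ℕ) : s.count i < n := by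
  rcases Nat.eq_zero_or_pos (s.count i) with h | h
  · omega
  · have hi : i ∈ s := Multiset.count_pos.mp h
    have hipos : 1 ≤ i := hpos i hi
    have hle : Multiset.replicate (s.count i) i ≤ s :=
      Multiset.le_count_iff_replicate_le.mp le_rfl
    obtain ⟨u, hu⟩ := Multiset.le_iff_exists_add.mp hle
    have hsum2 : s.count i * i + u.sum = n := by
      rw [hu, Multiset.sum_add, Multiset.sum_replicate, smul_eq_mul] at hsum
      omega
    rcases Nat.lt_or_ge i 2 with h2 | h2
    · have hi1 : i = 1 := by omega
      subst hi1
      by_contra hc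
      push_neg at hc
      have hcn : s.count 1 = n := by omega
      have husum : u.sum = 0 := by omega
      have hu0 : u = 0 := by
        rcases Multiset.empty_or_exists_mem u with h' | ⟨a, ha⟩
        · exact h'
        · exfalso
          have h1 : a = 0 := Multiset.sum_eq_zero_iff.mp husum a ha
          have h2 : 0 < a := hpos a (by rw [hu]; exact Multiset.mem_add.mpr (Or.inr ha))
          omega
      apply hrep
      rw [hu, hu0, hcn]
      simp
    · have : 2 * s.count i ≤ s.count i * i := by
        rw [mul_comm]; exact Nat.mul_le_mul le_rfl h2
      omega

end Combinatorial

section Special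

lemma stmt10_sup_replicate_one (m : ℕ) : (Multiset.replicate m 1).sup ≤ 1 := by
  induction m with
  | zero => simp
  | succ j ih => rw [Multiset.replicate_succ, Multiset.sup_cons]; omega

lemma sup_sa (m : ℕ) : (2 ::ₘ Multiset.replicate m 1).sup = 2 := by
  rw [Multiset.sup_cons]
  have := stmt10_sup_replicate_one m
  omega

lemma sup_sb (m : ℕ) : (2 ::ₘ 2 ::ₘ Multiset.replicate m 1).sup = 2 := by
  rw [Multiset.sup_cons, sup_sa]; omega

lemma sup_sc (m : ℕ) : (3 ::ₘ Multiset.replicate m 1).sup = 3 := by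
  rw [Multiset.sup_cons]
  have := stmt10_sup_replicate_one m
  omega

lemma Icc12 : Finset.Icc 1 2 = ({1, 2} : Finset ℕ) := by decide
lemma Icc13 : Finset.Icc 1 3 = ({1, 2, 3} : Finset ℕ) := by decide

lemma pos_sa (m : ℕ) : ∀ p ∈ (2 ::ₘ Multiset.replicate m 1), 0 < p := by
  intro p hp
  rcases Multiset.mem_cons.mp hp with rfl | h
  · omega
  · rw [Multiset.eq_of_mem_replicate h]; omega

lemma pos_sb (m : ℕ) : ∀ p ∈ (2 ::ₘ 2 ::ₘ Multiset.replicate m 1), 0 < p := by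
  intro p hp
  rcases Multiset.mem_cons.mp hp with rfl | h
  · omega
  · exact pos_sa m p h

lemma pos_sc (m : ℕ) : ∀ p ∈ (3 ::ₘ Multiset.replicate m 1), 0 < p := by
  intro p hp
  rcases Multiset.mem_cons.mp hp with rfl | h
  · omega
  · rw [Multiset.eq_of_mem_replicate h]; omega

lemma sum_sa (m : ℕ) : (2 ::ₘ Multiset.replicate m 1).sum = 2 + m := by
  simp [Multiset.sum_cons, Multiset.sum_replicate]

lemma sum_sb (m : ℕ) : (2 ::ₘ 2 ::ₘ Multiset.replicate m 1).sum = 4 + m := by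
  simp [Multiset.sum_cons, Multiset.sum_replicate]; omega

lemma sum_sc (m : ℕ) : (3 ::ₘ Multiset.replicate m 1).sum = 3 + m := by
  simp [Multiset.sum_cons, Multiset.sum_replicate]

lemma count_sa1 (m : ℕ) : (2 ::ₘ Multiset.replicate m 1).count 1 = m := by
  simp [Multiset.count_cons, Multiset.count_replicate]
lemma count_sa2 (m : ℕ) : (2 ::ₘ Multiset.replicate m 1).count 2 = 1 := by
  simp [Multiset.count_cons, Multiset.count_replicate]
lemma count_sa3 (m : ℕ) : (2 ::ₘ Multiset.replicate m 1).count 3 = 0 := by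
  simp [Multiset.count_cons, Multiset.count_replicate]
lemma count_sb1 (m : ℕ) : (2 ::ₘ 2 ::ₘ Multiset.replicate m 1).count 1 = m := by
  simp [Multiset.count_cons, Multiset.count_replicate]
lemma count_sb2 (m : ℕ) : (2 ::ₘ 2 ::ₘ Multiset.replicate m 1).count 2 = 2 := by
  simp [Multiset.count_cons, Multiset.count_replicate]
lemma count_sc1 (m : ℕ) : (3 ::ₘ Multiset.replicate m 1).count 1 = m := by
  simp [Multiset.count_cons, Multiset.count_replicate]
lemma count_sc2 (m : ℕ) : (3 ::ₘ Multiset.replicate m 1).count 2 = 0 := by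
  simp [Multiset.count_cons, Multiset.count_replicate]
lemma count_sc3 (m : ℕ) : (3 ::ₘ Multiset.replicate m 1).count 3 = 1 := by
  simp [Multiset.count_cons, Multiset.count_replicate]

lemma prod_sa {M : Type*} [CommMonoid M] (m : ℕ) (f : ℕ → M) :
    ∏ i ∈ Finset.Icc 1 (2 ::ₘ Multiset.replicate m 1).sup,
      f ((2 ::ₘ Multiset.replicate m 1).count i) = f m * f 1 := by
  rw [sup_sa, Icc12, Finset.prod_pair (by omega), count_sa1, count_sa2]

lemma prod_sb {M : Type*} [CommMonoid M] (m : ℕ) (f : ℕ → M) :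
    ∏ i ∈ Finset.Icc 1 (2 ::ₘ 2 ::ₘ Multiset.replicate m 1).sup,
      f ((2 ::ₘ 2 ::ₘ Multiset.replicate m 1).count i) = f m * f 2 := by
  rw [sup_sb, Icc12, Finset.prod_pair (by omega), count_sb1, count_sb2]

lemma prod_sc {M : Type*} [CommMonoid M] (m : ℕ) (f : ℕ → M) :
    ∏ i ∈ Finset.Icc 1 (3 ::ₘ Multiset.replicate m 1).sup,
      f ((3 ::ₘ Multiset.replicate m 1).count i) = f m * f 0 * f 1 := by
  rw [sup_sc, Icc13]
  rw [show ({1,2,3} : Finset ℕ) = insert 1 {2,3} from rfl]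
  rw [Finset.prod_insert (by decide), Finset.prod_pair (by omega),
    count_sc1, count_sc2, count_sc3, mul_assoc]

lemma myD_sa (m : ℕ) : myD (2 ::ₘ Multiset.replicate m 1) = m / 2 := by
  rw [myD, sup_sa, Icc12, Finset.sum_pair (by omega), count_sa1, count_sa2]
  omega

lemma myD_sb (m : ℕ) : myD (2 ::ₘ 2 ::ₘ Multiset.replicate m 1) = m / 2 + 1 := by
  rw [myD, sup_sb, Icc12, Finset.sum_pair (by omega), count_sb1, count_sb2]

lemma myD_sc (m : ℕ) : myD (3 ::ₘ Multiset.replicate m 1) = m / 2 := by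
  rw [myD, sup_sc, Icc13]
  rw [show ({1,2,3} : Finset ℕ) = insert 1 {2,3} from rfl]
  rw [Finset.sum_insert (by decide), Finset.sum_pair (by omega),
    count_sc1, count_sc2, count_sc3]
  omega

def paP (n : ℕ) (hn : 2 ≤ n) : Nat.Partition n :=
  ⟨2 ::ₘ Multiset.replicate (n-2) 1, fun {p} hp => pos_sa _ p hp, by rw [sum_sa]; omega⟩
def pbP (n : ℕ) (hn : 4 ≤ n) : Nat.Partition n :=
  ⟨2 ::ₘ 2 ::ₘ Multiset.replicate (n-4) 1, fun {p} hp => pos_sb _ p hp, by rw [sum_sb]; omega⟩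
def pcP (n : ℕ) (hn : 3 ≤ n) : Nat.Partition n :=
  ⟨3 ::ₘ Multiset.replicate (n-3) 1, fun {p} hp => pos_sc _ p hp, by rw [sum_sc]; omega⟩

lemma paP_parts (n : ℕ) (hn : 2 ≤ n) : (paP n hn).parts = 2 ::ₘ Multiset.replicate (n-2) 1 := rfl
lemma pbP_parts (n : ℕ) (hn : 4 ≤ n) :
    (pbP n hn).parts = 2 ::ₘ 2 ::ₘ Multiset.replicate (n-4) 1 := rfl
lemma pcP_parts (n : ℕ) (hn : 3 ≤ n) : (pcP n hn).parts = 3 ::ₘ Multiset.replicate (n-3) 1 := rfl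

end Special

section Arith

noncomputable def myC (n : ℕ) : ℝ :=
  (telephone ((n+1)/2) : ℝ) / (Nat.factorial (n/2) : ℝ)

lemma myC_zero : myC 0 = 1 := by norm_num [myC, telephone]
lemma myC_one : myC 1 = 1 := by norm_num [myC, telephone]
lemma myC_two : myC 2 = 1 := by norm_num [myC, telephone]

lemma tel_rec (j : ℕ) : telephone (j+2) = telephone (j+1) + (j+1) * telephone j := by
  simp [telephone]

lemma fact_ne (m : ℕ) : ((Nat.factorial m : ℝ)) ≠ 0 := by
  exact_mod_cast Nat.factorial_ne_zero m

lemma arith_even (j : ℕ) :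
    myC (2*j+2) / ((j:ℝ)+2) + myC (2*j) / ((j:ℝ)+2) = myC (2*j+4) := by
  simp only [myC, show (2*j+2+1)/2 = j+1 from by omega, show (2*j+2)/2 = j+1 from by omega,
    show (2*j+1)/2 = j from by omega, show (2*j)/2 = j from by omega,
    show (2*j+4+1)/2 = j+2 from by omega, show (2*j+4)/2 = j+2 from by omega]
  rw [tel_rec j, show j+1+1 = j+2 from rfl, Nat.factorial_succ (j+1), Nat.factorial_succ j]
  have h1 := fact_ne j
  have h2 := fact_ne (j+1)
  field_simp
  push_cast
  ring

lemma arith_odd (j : ℕ) :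
    myC (2*j+3) / ((j:ℝ)+2) + myC (2*j+1) / ((j:ℝ)+2) + myC (2*j+2) / ((j:ℝ)+2)
      = myC (2*j+5) := by
  simp only [myC, show (2*j+3+1)/2 = j+2 from by omega, show (2*j+3)/2 = j+1 from by omega,
    show (2*j+1+1)/2 = j+1 from by omega, show (2*j+1)/2 = j from by omega,
    show (2*j+2+1)/2 = j+1 from by omega, show (2*j+2)/2 = j+1 from by omega,
    show (2*j+5+1)/2 = j+3 from by omega, show (2*j+5)/2 = j+2 from by omega]
  rw [show j+3 = (j+1)+2 from rfl, tel_rec (j+1), show j+1+1 = j+2 from rfl,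
    Nat.factorial_succ (j+1), Nat.factorial_succ j]
  have h1 := fact_ne j
  have h2 := fact_ne (j+1)
  field_simp
  push_cast
  ring

end Arith

theorem stmt_10 (L : ℕ → ℕ → ℕ)
    (h0 : ∀ k, L 0 k = 1) (h1 : ∀ k, L 1 k = 1)
    (hrec : ∀ n k, 2 ≤ n → L n k = 1 + k +
      ∑ α ∈ Finset.univ.filter
          (fun α : Nat.Partition n => α.parts ≠ {n} ∧ α.parts ≠ Multiset.replicate n 1),
        ∑ m ∈ Finset.range k,
          ∏ i ∈ Finset.Icc 1 (α.parts.sup), L (Multiset.count i α.parts) m)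
    (n : ℕ) :
    Filter.Tendsto (fun k : ℕ => (L n k : ℝ) / (k : ℝ) ^ (n / 2)) Filter.atTop
      (nhds ((telephone ((n + 1) / 2) : ℝ) / (Nat.factorial (n / 2) : ℝ))) := by
  induction n using Nat.strong_induction_on with
  | _ n IH =>
  rcases Nat.lt_or_ge n 2 with hn2 | hn2
  · interval_cases n
    · rw [show ((telephone ((0+1)/2) : ℝ)) / (Nat.factorial (0/2) : ℝ) = 1 by
        norm_num [telephone]]
      refine Tendsto.congr (fun k => ?_) tendsto_const_nhds
      simp [h0]
    · rw [show ((telephone ((1+1)/2) : ℝ)) / (Nat.factorial (1/2) : ℝ) = 1 by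
        norm_num [telephone]]
      refine Tendsto.congr (fun k => ?_) tendsto_const_nhds
      simp [h1]
  · have hd1 : 1 ≤ n/2 := by omega
    classical
    set v : Nat.Partition n → ℝ := fun α =>
      if myD α.parts + 1 = n/2 then
        (∏ i ∈ Finset.Icc 1 α.parts.sup, myC (Multiset.count i α.parts))
          / ((myD α.parts : ℝ) + 1)
      else 0 with hv
    have hIH : ∀ m, m < n →
        Tendsto (fun k : ℕ => ((L m k : ℕ):ℝ)/(k:ℝ)^(m/2)) atTop (nhds (myC m)) :=
      fun m hm => IH m hm
    have hshift : ∀ α ∈ Finset.univ.filter (fun α : Nat.Partition n =>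
        α.parts ≠ {n} ∧ α.parts ≠ Multiset.replicate n 1),
        Tendsto (fun k : ℕ =>
          (∑ m ∈ Finset.range k, ∏ i ∈ Finset.Icc 1 α.parts.sup,
            ((L (Multiset.count i α.parts) m : ℕ) : ℝ)) / (k:ℝ)^(n/2))
          atTop (nhds (v α)) := by
      intro α hα
      obtain ⟨hA1, hA2⟩ := (Finset.mem_filter.mp hα).2
      have hpos : ∀ p ∈ α.parts, 0 < p := fun p hp => α.parts_pos hp
      have hprod : Tendsto (fun m : ℕ =>
          (∏ i ∈ Finset.Icc 1 α.parts.sup, ((L (Multiset.count i α.parts) m : ℕ):ℝ))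
            / (m:ℝ)^(myD α.parts)) atTop
          (nhds (∏ i ∈ Finset.Icc 1 α.parts.sup, myC (Multiset.count i α.parts))) := by
        have hh := tendsto_finset_prod (Finset.Icc 1 α.parts.sup)
          (fun i _ => hIH (Multiset.count i α.parts)
            (stmt10_count_lt (by omega) hpos α.parts_sum hA2 i))
        apply hh.congr (fun m => ?_)
        rw [Finset.prod_div_distrib, Finset.prod_pow_eq_pow_sum]
        rfl
      have hces := stmt10_cesaro_pow _ _ _ hprod
      have hDle : myD α.parts + 1 ≤ n/2 := by
        have hde := stmt10_two_myD_add_myE α.parts hpos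
        rw [α.parts_sum] at hde
        have hge := stmt10_myE_ge_two hpos α.parts_sum hA2
        omega
      exact stmt10_shift_pow _ _ _ _ hDle hces
    have t1 : Tendsto (fun k : ℕ => (1:ℝ)/(k:ℝ)^(n/2)) atTop (nhds 0) := by
      have b1 : Tendsto (fun k : ℕ => (1:ℝ)/(k:ℝ)^0) atTop (nhds 1) := by
        simpa using tendsto_const_nhds
      have := stmt10_shift_pow (fun _ => (1:ℝ)) 0 (n/2) 1 (by omega) b1
      rwa [if_neg (by omega)] at this
    have t2 : Tendsto (fun k : ℕ => (k:ℝ)/(k:ℝ)^(n/2)) atTop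
        (nhds (if 1 = n/2 then (1:ℝ) else 0)) := by
      apply stmt10_shift_pow _ _ _ _ hd1
      apply Tendsto.congr' _ (tendsto_const_nhds (x := (1:ℝ)))
      filter_upwards [eventually_ge_atTop 1] with k hk
      have hkne : (k:ℝ) ≠ 0 := by positivity
      rw [pow_one, div_self hkne]
    have t3 := tendsto_finset_sum _ hshift
    have comb := (t1.add t2).add t3
    rw [zero_add] at comb
    have hval : (if 1 = n/2 then (1:ℝ) else 0) +
        (∑ α ∈ Finset.univ.filter (fun α : Nat.Partition n =>
          α.parts ≠ {n} ∧ α.parts ≠ Multiset.replicate n 1), v α)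
        = (telephone ((n + 1) / 2) : ℝ) / (Nat.factorial (n / 2) : ℝ) := by
      suffices h : (if 1 = n/2 then (1:ℝ) else 0) +
          (∑ α ∈ Finset.univ.filter (fun α : Nat.Partition n =>
            α.parts ≠ {n} ∧ α.parts ≠ Multiset.replicate n 1), v α) = myC n by
        exact h
      rcases Nat.lt_or_ge n 4 with hn4 | hn4
      · interval_cases n
        · -- n = 2
          have hempty : ∀ α : Nat.Partition 2, α ∉ Finset.univ.filter
              (fun α : Nat.Partition 2 =>
                α.parts ≠ {2} ∧ α.parts ≠ Multiset.replicate 2 1) := by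
            intro α hα
            obtain ⟨hA1, hA2⟩ := (Finset.mem_filter.mp hα).2
            have hpos : ∀ p ∈ α.parts, 0 < p := fun p hp => α.parts_pos hp
            have hde := stmt10_two_myD_add_myE α.parts hpos
            rw [α.parts_sum] at hde
            have hE3 : myE α.parts ≤ 3 := by omega
            rcases stmt10_classify hpos α.parts_sum hA2 hE3 with
              ⟨m, hm, hnm⟩ | ⟨m, hm, hnm⟩ | ⟨m, hm, hnm⟩
            · have hm0 : m = 0 := by omega
              subst hm0
              apply hA1
              rw [hm]
              rfl
            · omega
            · omega
          rw [Finset.sum_eq_zero (fun α hα => absurd hα (hempty α))]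
          norm_num [myC, telephone]
        · -- n = 3
          have hpa3 : paP 3 (by omega) ∈ Finset.univ.filter
              (fun α : Nat.Partition 3 =>
                α.parts ≠ {3} ∧ α.parts ≠ Multiset.replicate 3 1) := by
            rw [Finset.mem_filter]
            refine ⟨Finset.mem_univ _, ?_, ?_⟩
            · intro h
              have h2 := congrArg (Multiset.count 2) h
              rw [paP_parts, count_sa2, Multiset.count_singleton,
                if_neg (by omega)] at h2
              exact one_ne_zero h2
            · intro h
              have h2 := congrArg (Multiset.count 2) h
              rw [paP_parts, count_sa2, Multiset.count_replicate,
                if_neg (by omega)] at h2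
              exact one_ne_zero h2
          have hAeq : Finset.univ.filter (fun α : Nat.Partition 3 =>
              α.parts ≠ {3} ∧ α.parts ≠ Multiset.replicate 3 1)
              = {paP 3 (by omega)} := by
            apply Finset.ext
            intro α
            constructor
            · intro hα
              obtain ⟨hA1, hA2⟩ := (Finset.mem_filter.mp hα).2
              have hpos : ∀ p ∈ α.parts, 0 < p := fun p hp => α.parts_pos hp
              have hde := stmt10_two_myD_add_myE α.parts hpos
              rw [α.parts_sum] at hde
              have hE3 : myE α.parts ≤ 3 := by omega
              rcases stmt10_classify hpos α.parts_sum hA2 hE3 with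
                ⟨m, hm, hnm⟩ | ⟨m, hm, hnm⟩ | ⟨m, hm, hnm⟩
              · have hm1 : m = 1 := by omega
                subst hm1
                rw [Finset.mem_singleton]
                exact Nat.Partition.ext (by rw [hm, paP_parts])
              · omega
              · have hm0 : m = 0 := by omega
                subst hm0
                exact absurd (by rw [hm]; rfl) hA1
            · intro hα
              rw [Finset.mem_singleton] at hα
              rw [hα]
              exact hpa3
          rw [hAeq, Finset.sum_singleton]
          have hvpa : v (paP 3 (by omega)) = 1 := by
            simp only [hv]
            rw [paP_parts, myD_sa, prod_sa _ myC]
            norm_num [myC_one]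
          rw [hvpa]
          have : telephone 2 = 2 := by simp [telephone]
          norm_num [myC, this]
      · -- n ≥ 4
        have hge2 : 2 ≤ n := by omega
        have hge3 : 3 ≤ n := by omega
        have hmema : paP n hge2 ∈ Finset.univ.filter (fun α : Nat.Partition n =>
            α.parts ≠ {n} ∧ α.parts ≠ Multiset.replicate n 1) := by
          rw [Finset.mem_filter]
          refine ⟨Finset.mem_univ _, ?_, ?_⟩
          · intro h
            have h2 := congrArg (Multiset.count 2) h
            rw [paP_parts, count_sa2, Multiset.count_singleton,
              if_neg (by omega)] at h2
            exact one_ne_zero h2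
          · intro h
            have h2 := congrArg (Multiset.count 2) h
            rw [paP_parts, count_sa2, Multiset.count_replicate,
              if_neg (by omega)] at h2
            exact one_ne_zero h2
        have hmemb : pbP n hn4 ∈ Finset.univ.filter (fun α : Nat.Partition n =>
            α.parts ≠ {n} ∧ α.parts ≠ Multiset.replicate n 1) := by
          rw [Finset.mem_filter]
          refine ⟨Finset.mem_univ _, ?_, ?_⟩
          · intro h
            have h2 := congrArg (Multiset.count 2) h
            rw [pbP_parts, count_sb2, Multiset.count_singleton,
              if_neg (by omega)] at h2
            exact absurd h2 (by omega)
          · intro h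
            have h2 := congrArg (Multiset.count 2) h
            rw [pbP_parts, count_sb2, Multiset.count_replicate,
              if_neg (by omega)] at h2
            exact absurd h2 (by omega)
        have hmemc : pcP n hge3 ∈ Finset.univ.filter (fun α : Nat.Partition n =>
            α.parts ≠ {n} ∧ α.parts ≠ Multiset.replicate n 1) := by
          rw [Finset.mem_filter]
          refine ⟨Finset.mem_univ _, ?_, ?_⟩
          · intro h
            have h2 := congrArg (Multiset.count 3) h
            rw [pcP_parts, count_sc3, Multiset.count_singleton,
              if_neg (by omega)] at h2
            exact one_ne_zero h2
          · intro h
            have h2 := congrArg (Multiset.count 3) h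
            rw [pcP_parts, count_sc3, Multiset.count_replicate,
              if_neg (by omega)] at h2
            exact one_ne_zero h2
        have hab : paP n hge2 ≠ pbP n hn4 := by
          intro h
          have h2 := congrArg (fun p : Nat.Partition n => Multiset.count 2 p.parts) h
          simp only [paP_parts, pbP_parts, count_sa2, count_sb2] at h2
          omega
        have hac : paP n hge2 ≠ pcP n hge3 := by
          intro h
          have h2 := congrArg (fun p : Nat.Partition n => Multiset.count 3 p.parts) h
          simp only [paP_parts, pcP_parts, count_sa3, count_sc3] at h2
          omega
        have hbc : pbP n hn4 ≠ pcP n hge3 := by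
          intro h
          have h2 := congrArg (fun p : Nat.Partition n => Multiset.count 2 p.parts) h
          simp only [pbP_parts, pcP_parts, count_sb2, count_sc2] at h2
          omega
        have hsubset : ({paP n hge2, pbP n hn4, pcP n hge3} : Finset (Nat.Partition n)) ⊆
            Finset.univ.filter (fun α : Nat.Partition n =>
              α.parts ≠ {n} ∧ α.parts ≠ Multiset.replicate n 1) := by
          intro x hx
          simp only [Finset.mem_insert, Finset.mem_singleton] at hx
          rcases hx with rfl | rfl | rfl
          · exact hmema
          · exact hmemb
          · exact hmemc
        have hvan : ∀ α ∈ Finset.univ.filter (fun α : Nat.Partition n =>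
            α.parts ≠ {n} ∧ α.parts ≠ Multiset.replicate n 1),
            α ∉ ({paP n hge2, pbP n hn4, pcP n hge3} : Finset (Nat.Partition n)) →
            v α = 0 := by
          intro α hα hno
          simp only [hv]
          rw [if_neg]
          intro hcond
          obtain ⟨hA1, hA2⟩ := (Finset.mem_filter.mp hα).2
          have hpos : ∀ p ∈ α.parts, 0 < p := fun p hp => α.parts_pos hp
          have hde := stmt10_two_myD_add_myE α.parts hpos
          rw [α.parts_sum] at hde
          have hE3 : myE α.parts ≤ 3 := by omega
          apply hno
          simp only [Finset.mem_insert, Finset.mem_singleton]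
          rcases stmt10_classify hpos α.parts_sum hA2 hE3 with
            ⟨m, hm, hnm⟩ | ⟨m, hm, hnm⟩ | ⟨m, hm, hnm⟩
          · left
            have hm' : m = n - 2 := by omega
            subst hm'
            exact Nat.Partition.ext (by rw [hm, paP_parts])
          · right; left
            have hm' : m = n - 4 := by omega
            subst hm'
            exact Nat.Partition.ext (by rw [hm, pbP_parts])
          · right; right
            have hm' : m = n - 3 := by omega
            subst hm'
            exact Nat.Partition.ext (by rw [hm, pcP_parts])
        rw [← Finset.sum_subset hsubset hvan]
        rw [Finset.sum_insert (by simp [hab, hac]),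
          Finset.sum_insert (by simp [hbc]), Finset.sum_singleton]
        have hvpa : v (paP n hge2) = myC (n-2) / ((((n-2)/2 : ℕ):ℝ) + 1) := by
          simp only [hv]
          rw [paP_parts, myD_sa, prod_sa _ myC, if_pos (show (n-2)/2 + 1 = n/2 by omega),
            myC_one, mul_one]
        have hvpb : v (pbP n hn4) = myC (n-4) / ((((n-4)/2 + 1 : ℕ):ℝ) + 1) := by
          simp only [hv]
          rw [pbP_parts, myD_sb, prod_sb _ myC,
            if_pos (show (n-4)/2 + 1 + 1 = n/2 by omega), myC_two, mul_one]
        rw [hvpa, hvpb, if_neg (show ¬ (1 = n/2) by omega)]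
        rcases Nat.even_or_odd n with he | ho
        · -- even
          obtain ⟨s, hs⟩ := he
          obtain ⟨j, hj⟩ : ∃ j, n = 2*j + 4 := ⟨s - 2, by omega⟩
          have hvpc : v (pcP n hge3) = 0 := by
            simp only [hv]
            rw [pcP_parts, myD_sc, if_neg (show ¬ ((n-3)/2 + 1 = n/2) by omega)]
          rw [hvpc]
          rw [show n-2 = 2*j+2 from by omega, show n-4 = 2*j from by omega,
            show (2*j+2)/2 = j+1 from by omega, show (2*j)/2 + 1 = j+1 from by omega,
            show n = 2*j+4 from hj]
          have harith := arith_even j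
          push_cast
          linear_combination harith
        · -- odd
          obtain ⟨s, hs⟩ := ho
          obtain ⟨j, hj⟩ : ∃ j, n = 2*j + 5 := ⟨s - 2, by omega⟩
          have hvpc : v (pcP n hge3) = myC (n-3) / ((((n-3)/2 : ℕ):ℝ) + 1) := by
            simp only [hv]
            rw [pcP_parts, myD_sc, prod_sc _ myC,
              if_pos (show (n-3)/2 + 1 = n/2 by omega), myC_zero, myC_one,
              mul_one, mul_one]
          rw [hvpc]
          rw [show n-2 = 2*j+3 from by omega, show n-4 = 2*j+1 from by omega,
            show n-3 = 2*j+2 from by omega,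
            show (2*j+3)/2 = j+1 from by omega, show (2*j+1)/2 + 1 = j+1 from by omega,
            show (2*j+2)/2 = j+1 from by omega,
            show n = 2*j+5 from hj]
          have harith := arith_odd j
          push_cast
          linear_combination harith
    rw [← hval]
    apply comb.congr (fun k => ?_)
    rw [hrec n k hn2]
    push_cast
    rw [add_div, add_div, Finset.sum_div]
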